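/- Let Q be a lower transition rate operator on a finite nonempty set 𝒳, and let (T_t)_{t≥0} be the associated family of operators determined by the differential equation d/dt T_t f = Q(T_t f) with T_0 f = f. Then for every t ≥ 0, T_t = lim_{n→∞} (I + (t/n) Q)^n in operator norm; that is, for every ε > 0 there exists N ∈ ℕ such that for all n ≥ N and all f ∈ 𝓛(𝒳) with ‖f‖ = 1, one has ‖T_t f − (I + (t/n)Q)^n f‖ < ε, where (I + (t/n)Q)^n denotes the n-fold composition of the map g ↦ g + (t/n) Q g. -/

import Mathlib

open Filter Topology

/-- The minimum of a real-valued function on a finite nonempty type. -/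
noncomputable def minf {X : Type*} [Fintype X] [Nonempty X] (f : X → ℝ) : ℝ :=
  Finset.univ.inf' Finset.univ_nonempty f

/-- The maximum of a real-valued function on a finite nonempty type. -/
noncomputable def maxf {X : Type*} [Fintype X] [Nonempty X] (f : X → ℝ) : ℝ :=
  Finset.univ.sup' Finset.univ_nonempty f

/-- The (real-valued) indicator function of a set. -/
noncomputable def ind {X : Type*} (A : Set X) : X → ℝ := A.indicator 1

/-- The conjugate (upper) operator `f ↦ -(Q (-f))`. -/
def conjOp {X : Type*} (Q : (X → ℝ) → (X → ℝ)) : (X → ℝ) → (X → ℝ) :=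
  fun f => -(Q (-f))

/-- A lower transition rate operator. -/
def IsLTRO {X : Type*} [Fintype X] (Q : (X → ℝ) → (X → ℝ)) : Prop :=
  (∀ μ : ℝ, Q (fun _ => μ) = 0) ∧
  (∀ f g : X → ℝ, Q f + Q g ≤ Q (f + g)) ∧
  (∀ l : ℝ, 0 ≤ l → ∀ f : X → ℝ, Q (l • f) = l • Q f) ∧
  (∀ x y : X, x ≠ y → 0 ≤ Q (ind {y}) x)

/-- A lower transition operator. -/
def IsLTO {X : Type*} [Fintype X] [Nonempty X] (T : (X → ℝ) → (X → ℝ)) : Prop :=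
  (∀ f : X → ℝ, ∀ x : X, minf f ≤ T f x) ∧
  (∀ f g : X → ℝ, T f + T g ≤ T (f + g)) ∧
  (∀ l : ℝ, 0 ≤ l → ∀ f : X → ℝ, T (l • f) = l • T f)

/-- `T` is the family of operators solving `d/dt T_t f = Q (T_t f)` on `[0,∞)`
with `T_0 f = f`. -/
def IsSol {X : Type*} [Fintype X] (Q : (X → ℝ) → (X → ℝ))
    (T : ℝ → (X → ℝ) → (X → ℝ)) : Prop :=
  (∀ f : X → ℝ, T 0 f = f) ∧
  (∀ f : X → ℝ, ∀ t : ℝ, 0 ≤ t →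
    HasDerivWithinAt (fun s => T s f) (Q (T t f)) (Set.Ici 0) t)

/-- Ergodicity of a lower transition rate operator, expressed via its
associated time-dependent family `T`. -/
def ErgodicQ {X : Type*} [Fintype X] (T : ℝ → (X → ℝ) → (X → ℝ)) : Prop :=
  ∀ f : X → ℝ, ∃ c : ℝ, Tendsto (fun t => T t f) atTop (𝓝 (fun _ : X => c))

/-- Ergodicity of a lower transition operator. -/
def ErgodicT {X : Type*} [Fintype X] (T : (X → ℝ) → (X → ℝ)) : Prop :=
  ∀ f : X → ℝ, ∃ c : ℝ, Tendsto (fun n : ℕ => T^[n] f) atTop (𝓝 (fun _ : X => c))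

/-- `x` is upper reachable from `y` (w.r.t. the lower transition rate operator `Q`). -/
def upperReach {X : Type*} [Fintype X] (Q : (X → ℝ) → (X → ℝ)) (y x : X) : Prop :=
  ∃ (n : ℕ) (p : ℕ → X), p 0 = y ∧ p n = x ∧
    ∀ k : ℕ, k < n → p (k + 1) ≠ p k ∧ 0 < conjOp Q (ind {p (k + 1)}) (p k)

/-- One step of the lower-reachability construction: `A ↦ A ∪ {y ∉ A : Q(𝟙_A)(y) > 0}`. -/
def lowerStep {X : Type*} [Fintype X] (Q : (X → ℝ) → (X → ℝ)) (A : Set X) : Set X :=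
  A ∪ {y : X | y ∉ A ∧ 0 < Q (ind A) y}

/-- `A` is lower reachable from `x`: `x ∈ Aₙ` where `n` is the first index with
`Aₙ = Aₙ₊₁` (equivalently, any such index, since the sequence is determined by
recursion and increasing). -/
def lowerReach {X : Type*} [Fintype X] (Q : (X → ℝ) → (X → ℝ)) (x : X) (A : Set X) : Prop :=
  ∃ n : ℕ, (lowerStep Q)^[n] A = (lowerStep Q)^[n + 1] A ∧ x ∈ (lowerStep Q)^[n] A

/-- The set `𝒳_RA := {x : ∃ n ≥ 1, min T̄ⁿ 𝟙ₓ > 0}`. -/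
noncomputable def XRA {X : Type*} [Fintype X] [Nonempty X]
    (T : (X → ℝ) → (X → ℝ)) : Set X :=
  {x : X | ∃ n : ℕ, 0 < minf ((conjOp T)^[n + 1] (ind {x}))}

/-- A regularly absorbing lower transition operator. -/
def RegAbs {X : Type*} [Fintype X] [Nonempty X] (T : (X → ℝ) → (X → ℝ)) : Prop :=
  (XRA T).Nonempty ∧ ∀ x : X, x ∉ XRA T → ∃ n : ℕ, 0 < T^[n + 1] (ind (XRA T)) x

/-- The set `𝒳_1A := {x : min T̄ 𝟙ₓ > 0}`. -/
noncomputable def X1A {X : Type*} [Fintype X] [Nonempty X]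
    (T : (X → ℝ) → (X → ℝ)) : Set X :=
  {x : X | 0 < minf (conjOp T (ind {x}))}

/-- A 1-step absorbing lower transition operator. -/
def OneStepAbs {X : Type*} [Fintype X] [Nonempty X] (T : (X → ℝ) → (X → ℝ)) : Prop :=
  (X1A T).Nonempty ∧ ∀ x : X, x ∉ X1A T → 0 < T (ind (X1A T)) x

/-- The operator (sup) norm of a non-negatively homogeneous operator. -/
noncomputable def opN {X : Type*} [Fintype X] (Q : (X → ℝ) → (X → ℝ)) : ℝ :=
  sSup {r : ℝ | ∃ f : X → ℝ, ‖f‖ = 1 ∧ r = ‖Q f‖}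


section StmtNineAux

variable {X : Type*} [Fintype X] [Nonempty X]

private lemma stmt9_Qzero (Q : (X → ℝ) → (X → ℝ)) (hQ : IsLTRO Q) : Q 0 = 0 := by
  have := hQ.1 0
  convert this using 2
  rfl

private lemma stmt9_Qsum (Q : (X → ℝ) → (X → ℝ)) (hQ : IsLTRO Q) {ι : Type*} (s : Finset ι)
    (g : ι → (X → ℝ)) : ∑ i ∈ s, Q (g i) ≤ Q (∑ i ∈ s, g i) := by
  classical
  induction s using Finset.induction with
  | empty => simp [stmt9_Qzero Q hQ]
  | insert a s hx ih =>
    rw [Finset.sum_insert hx, Finset.sum_insert hx]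
    calc Q (g a) + ∑ i ∈ s, Q (g i) ≤ Q (g a) + Q (∑ i ∈ s, g i) := by
          exact add_le_add_right ih _
      _ ≤ Q (g a + ∑ i ∈ s, g i) := hQ.2.1 _ _

private lemma stmt9_Qlip (Q : (X → ℝ) → (X → ℝ)) (hQ : IsLTRO Q) :
    ∃ C : ℝ, 0 ≤ C ∧ (∀ h : X → ℝ, ‖Q h‖ ≤ C * ‖h‖) ∧
      (∀ f g : X → ℝ, ‖Q f - Q g‖ ≤ C * ‖f - g‖) := by
  classical
  set C : ℝ := ∑ y : X, (‖Q (ind {y})‖ + ‖Q (-(ind {y}))‖) with hC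
  have hC0 : 0 ≤ C := Finset.sum_nonneg fun y _ => by positivity
  have hlow : ∀ (h : X → ℝ) (x : X), -(C * ‖h‖) ≤ Q h x := by
    intro h x
    have hdecomp : h = ∑ y : X, h y • ind {y} := by
      funext z
      simp only [Finset.sum_apply, Pi.smul_apply, ind, Set.indicator]
      rw [Finset.sum_eq_single z]
      · simp
      · intro b _ hb
        simp [Set.mem_singleton_iff, Ne.symm hb]
      · simp
    have h1 : ∑ y : X, Q (h y • ind {y}) x ≤ Q h x := by
      calc ∑ y : X, Q (h y • ind {y}) x = (∑ y : X, Q (h y • ind {y})) x := by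
            simp
        _ ≤ Q (∑ y : X, h y • ind {y}) x := (stmt9_Qsum Q hQ _ _) x
        _ = Q h x := by rw [← hdecomp]
    refine le_trans ?_ h1
    rw [hC, Finset.sum_mul, ← Finset.sum_neg_distrib]
    apply Finset.sum_le_sum
    intro y _
    have hy : |h y| ≤ ‖h‖ := by
      simpa using norm_le_pi_norm h y
    rcases le_or_gt 0 (h y) with hpos | hneg
    · rw [hQ.2.2.1 (h y) hpos]
      have : |Q (ind {y}) x| ≤ ‖Q (ind {y})‖ := by simpa using norm_le_pi_norm (Q (ind {y})) x
      have h2 : -(‖Q (ind {y})‖) ≤ Q (ind {y}) x := by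
        have := abs_le.mp this; linarith [this.1]
      calc -((‖Q (ind {y})‖ + ‖Q (-(ind {y}))‖) * ‖h‖)
          ≤ -(‖Q (ind {y})‖ * h y) := by
            nlinarith [mul_nonneg (norm_nonneg (Q (ind {y}))) (sub_nonneg.mpr (abs_le.mp hy).2),
              mul_nonneg (norm_nonneg (Q (-(ind {y})))) (norm_nonneg h)]
        _ ≤ h y * Q (ind {y}) x := by nlinarith
        _ = (h y • Q (ind {y})) x := rfl
    · have : h y • ind {y} = (-(h y)) • (-(ind {y})) := by
        funext z; simp
      rw [this, hQ.2.2.1 (-(h y)) (by linarith)]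
      have h3 : |Q (-(ind {y})) x| ≤ ‖Q (-(ind {y}))‖ := by
        simpa using norm_le_pi_norm (Q (-(ind {y}))) x
      have h2 := abs_le.mp h3
      have hy' := abs_le.mp hy
      calc -((‖Q (ind {y})‖ + ‖Q (-(ind {y}))‖) * ‖h‖)
          ≤ -(‖Q (-(ind {y}))‖ * (-(h y))) := by
            nlinarith [norm_nonneg (Q (ind {y})), norm_nonneg h]
        _ ≤ (-(h y)) * Q (-(ind {y})) x := by nlinarith
        _ = ((-(h y)) • Q (-(ind {y}))) x := rfl
  have hboth : ∀ (h : X → ℝ) (x : X), |Q h x| ≤ C * ‖h‖ := by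
    intro h x
    have hup : Q h x ≤ C * ‖h‖ := by
      have hsum : Q h + Q (-h) ≤ Q 0 := by
        have := hQ.2.1 h (-h)
        simpa using this
      have := hsum x
      rw [stmt9_Qzero Q hQ] at this
      have h2 := hlow (-h) x
      simp only [norm_neg] at h2
      simp only [Pi.add_apply, Pi.zero_apply] at this
      linarith
    have := hlow h x
    rw [abs_le]; constructor <;> linarith
  refine ⟨C, hC0, ?_, ?_⟩
  · intro h
    apply (pi_norm_le_iff_of_nonneg (by positivity)).mpr
    intro x
    simpa using hboth h x
  · intro f g
    apply (pi_norm_le_iff_of_nonneg (by positivity)).mpr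
    intro x
    have h1 : Q ((f - g) + g) ≥ Q (f - g) + Q g := hQ.2.1 _ _
    rw [sub_add_cancel] at h1
    have h2 : Q ((g - f) + f) ≥ Q (g - f) + Q f := hQ.2.1 _ _
    rw [sub_add_cancel] at h2
    have h3 := hboth (f - g) x
    have h4 := hboth (g - f) x
    rw [norm_sub_rev] at h4
    have h1x := h1 x; have h2x := h2 x
    simp only [Pi.add_apply] at h1x h2x
    simp only [Pi.sub_apply, Real.norm_eq_abs, abs_le]
    constructor <;> linarith [(abs_le.mp h3).1, (abs_le.mp h4).1]

private lemma stmt9_solBound (Q : (X → ℝ) → (X → ℝ)) (T : ℝ → (X → ℝ) → (X → ℝ))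
    (C t : ℝ) (hC0 : 0 ≤ C) (f : X → ℝ) (hf : ‖f‖ = 1)
    (h0 : T 0 f = f)
    (hQbd : ∀ h : X → ℝ, ‖Q h‖ ≤ C * ‖h‖)
    (hD : ∀ s : ℝ, 0 ≤ s → HasDerivWithinAt (fun u => T u f) (Q (T s f)) (Set.Ici 0) s) :
    ∀ s ∈ Set.Icc 0 t, ‖T s f‖ ≤ Real.exp (C * t) := by
  have hcont : ContinuousOn (fun u => T u f) (Set.Icc 0 t) := fun s hs =>
    ((hD s hs.1).continuousWithinAt).mono Set.Icc_subset_Ici_self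
  have hg := norm_le_gronwallBound_of_norm_deriv_right_le (f := fun u => T u f)
    (f' := fun s => Q (T s f)) (δ := 1) (K := C) (ε := 0) (a := 0) (b := t)
    hcont (fun s hs => (hD s hs.1).mono (Set.Ici_subset_Ici.mpr hs.1))
    (by show ‖T 0 f‖ ≤ 1; rw [h0, hf])
    (fun s hs => by rw [add_zero]; exact hQbd _)
  intro s hs
  calc ‖T s f‖ ≤ gronwallBound 1 C 0 (s - 0) := hg s hs
    _ = Real.exp (C * (s - 0)) := by rw [gronwallBound_ε0, one_mul]
    _ ≤ Real.exp (C * t) := by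
        apply Real.exp_le_exp.mpr
        nlinarith [hs.1, hs.2]

private lemma stmt9_mod (Q : (X → ℝ) → (X → ℝ)) (T : ℝ → (X → ℝ) → (X → ℝ))
    (C t M : ℝ) (hC0 : 0 ≤ C) (f : X → ℝ) (hM0 : 0 ≤ M)
    (hQbd : ∀ h : X → ℝ, ‖Q h‖ ≤ C * ‖h‖)
    (hD : ∀ s : ℝ, 0 ≤ s → HasDerivWithinAt (fun u => T u f) (Q (T s f)) (Set.Ici 0) s)
    (hMb : ∀ s ∈ Set.Icc 0 t, ‖T s f‖ ≤ M) :
    ∀ a b : ℝ, 0 ≤ a → a ≤ b → b ≤ t → ‖T b f - T a f‖ ≤ C * M * (b - a) := by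
  intro a b ha hab hbt
  have hder : ∀ s ∈ Set.Icc a b, HasDerivWithinAt (fun u => T u f) (Q (T s f)) (Set.Icc a b) s :=
    fun s hs => (hD s (le_trans ha hs.1)).mono
      (Set.Icc_subset_Ici_self.trans (Set.Ici_subset_Ici.mpr (by linarith)))
  have := Convex.norm_image_sub_le_of_norm_hasDerivWithin_le (f := fun u => T u f)
    (f' := fun s => Q (T s f)) (C := C * M) hder
    (fun s hs => le_trans (hQbd _) (by
      have := hMb s ⟨le_trans ha hs.1, le_trans hs.2 hbt⟩
      nlinarith))
    (convex_Icc a b) (Set.left_mem_Icc.mpr hab) (Set.right_mem_Icc.mpr hab)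
  calc ‖T b f - T a f‖ ≤ C * M * ‖b - a‖ := this
    _ = C * M * (b - a) := by rw [Real.norm_eq_abs, abs_of_nonneg (by linarith)]

private lemma stmt9_trunc (Q : (X → ℝ) → (X → ℝ)) (T : ℝ → (X → ℝ) → (X → ℝ))
    (C t M h : ℝ) (hC0 : 0 ≤ C) (f : X → ℝ) (hM0 : 0 ≤ M) (hh0 : 0 ≤ h)
    (hQlip : ∀ g g' : X → ℝ, ‖Q g - Q g'‖ ≤ C * ‖g - g'‖)
    (hD : ∀ s : ℝ, 0 ≤ s → HasDerivWithinAt (fun u => T u f) (Q (T s f)) (Set.Ici 0) s)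
    (hmod : ∀ a b : ℝ, 0 ≤ a → a ≤ b → b ≤ t → ‖T b f - T a f‖ ≤ C * M * (b - a)) :
    ∀ a : ℝ, 0 ≤ a → a + h ≤ t →
      ‖T (a + h) f - T a f - h • Q (T a f)‖ ≤ C * (C * M * h) * h := by
  intro a ha hat
  set g : ℝ → (X → ℝ) := fun s => T s f - T a f - (s - a) • Q (T a f) with hg
  have hgder : ∀ s ∈ Set.Icc a (a + h),
      HasDerivWithinAt g (Q (T s f) - Q (T a f)) (Set.Icc a (a+h)) s := by
    intro s hs
    have h1 : HasDerivWithinAt (fun u => T u f) (Q (T s f)) (Set.Icc a (a+h)) s :=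
      (hD s (le_trans ha hs.1)).mono
        (Set.Icc_subset_Ici_self.trans (Set.Ici_subset_Ici.mpr (by linarith)))
    have h2 : HasDerivWithinAt (fun s : ℝ => (s - a) • Q (T a f)) ((1:ℝ) • Q (T a f))
        (Set.Icc a (a+h)) s :=
      (((hasDerivWithinAt_id s _).sub_const a)).smul_const (Q (T a f))
    have := (h1.sub_const (T a f)).sub h2
    simp only [one_smul] at this
    exact this
  have hbd : ∀ s ∈ Set.Icc a (a + h), ‖Q (T s f) - Q (T a f)‖ ≤ C * (C * M * h) := by
    intro s hs
    calc ‖Q (T s f) - Q (T a f)‖ ≤ C * ‖T s f - T a f‖ := hQlip _ _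
      _ ≤ C * (C * M * h) := by
          have := hmod a s ha hs.1 (by linarith [hs.2])
          have h2 : ‖T s f - T a f‖ ≤ C * M * h :=
            le_trans this (by nlinarith [hs.2, mul_nonneg hC0 hM0])
          nlinarith [norm_nonneg (T s f - T a f)]
  have := Convex.norm_image_sub_le_of_norm_hasDerivWithin_le hgder hbd
    (convex_Icc a (a+h)) (Set.left_mem_Icc.mpr (by linarith)) (Set.right_mem_Icc.mpr (by linarith))
  have hga : g a = 0 := by simp [hg]
  have heq : g (a + h) = T (a + h) f - T a f - h • Q (T a f) := by simp [hg]
  rw [hga, sub_zero, heq] at this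
  calc ‖T (a + h) f - T a f - h • Q (T a f)‖ ≤ C * (C * M * h) * ‖a + h - a‖ := this
    _ = C * (C * M * h) * h := by
        rw [show a + h - a = h by ring, Real.norm_eq_abs, abs_of_nonneg hh0]

private lemma stmt9_euler (Q : (X → ℝ) → (X → ℝ)) (T : ℝ → (X → ℝ) → (X → ℝ))
    (C t M h : ℝ) (n : ℕ) (hC0 : 0 ≤ C) (f : X → ℝ)
    (hM0 : 0 ≤ M) (hh0 : 0 ≤ h) (hnh : (n : ℝ) * h = t)
    (h0 : T 0 f = f)
    (hQlip : ∀ g g' : X → ℝ, ‖Q g - Q g'‖ ≤ C * ‖g - g'‖)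
    (htrunc : ∀ a : ℝ, 0 ≤ a → a + h ≤ t →
      ‖T (a + h) f - T a f - h • Q (T a f)‖ ≤ C * (C * M * h) * h) :
    ∀ k : ℕ, k ≤ n → ‖T ((k : ℝ) * h) f - (fun g : X → ℝ => g + h • Q g)^[k] f‖ ≤
      (k : ℝ) * (C * (C * M * h) * h) * (1 + C * h) ^ k := by
  set τ := C * (C * M * h) * h with hτ
  have hτ0 : 0 ≤ τ := by positivity
  set S : (X → ℝ) → (X → ℝ) := fun g => g + h • Q g with hS
  intro k
  induction k with
  | zero => intro _; simp [h0]
  | succ k ih =>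
    intro hkn
    have hk : k ≤ n := le_of_lt (Nat.lt_of_succ_le hkn)
    have ihk := ih hk
    have hkh0 : 0 ≤ (k : ℝ) * h := by positivity
    have hkht : (k : ℝ) * h + h ≤ t := by
      rw [← hnh]
      have : (k : ℝ) + 1 ≤ (n : ℝ) := by exact_mod_cast hkn
      nlinarith
    have htr := htrunc ((k : ℝ) * h) hkh0 hkht
    set y := S^[k] f with hy
    set b := (k : ℝ) * h with hb
    have hlipstep : ‖Q (T b f) - Q y‖ ≤ C * ‖T b f - y‖ := hQlip _ _
    have hsplit : T ((k + 1 : ℕ) * h) f - S^[k+1] f =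
        (T (b + h) f - T b f - h • Q (T b f)) + ((T b f - y) + h • (Q (T b f) - Q y)) := by
      rw [Function.iterate_succ_apply', ← hy]
      have hcast : ((k + 1 : ℕ) : ℝ) * h = b + h := by push_cast [hb]; ring
      rw [hcast, hS]
      simp only [smul_sub]
      abel
    calc ‖T ((k + 1 : ℕ) * h) f - S^[k+1] f‖
        ≤ ‖T (b + h) f - T b f - h • Q (T b f)‖ + ‖(T b f - y) + h • (Q (T b f) - Q y)‖ := by
          rw [hsplit]; exact norm_add_le _ _
      _ ≤ τ + (‖T b f - y‖ + h * ‖Q (T b f) - Q y‖) := by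
          refine add_le_add htr (le_trans (norm_add_le _ _) ?_)
          rw [norm_smul, Real.norm_eq_abs, abs_of_nonneg hh0]
      _ ≤ τ + (1 + C * h) * ‖T b f - y‖ := by
          nlinarith [norm_nonneg (T b f - y), norm_nonneg (Q (T b f) - Q y)]
      _ ≤ τ + (1 + C * h) * ((k : ℝ) * τ * (1 + C * h) ^ k) := by
          have h1 : 0 ≤ 1 + C * h := by positivity
          nlinarith [norm_nonneg (T b f - y)]
      _ ≤ ((k + 1 : ℕ) : ℝ) * τ * (1 + C * h) ^ (k + 1) := by
          push_cast
          have h1 : (1:ℝ) ≤ 1 + C * h := by nlinarith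
          have h2 : (1:ℝ) ≤ (1 + C * h) ^ (k+1) := by
            calc (1:ℝ) = 1 ^ (k+1) := by norm_num
              _ ≤ (1 + C * h) ^ (k+1) := pow_le_pow_left₀ (by norm_num) h1 _
          rw [pow_succ] at h2 ⊢
          have h3 := mul_le_mul_of_nonneg_left h2 hτ0
          nlinarith [pow_nonneg (by linarith : (0:ℝ) ≤ 1 + C*h) k, Nat.cast_nonneg (α := ℝ) k]

end StmtNineAux

/-- `T_t = lim_{n→∞} (I + (t/n) Q)ⁿ` in operator norm. -/

theorem stmt9 {X : Type*} [Fintype X] [Nonempty X]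
    (Q : (X → ℝ) → (X → ℝ)) (hQ : IsLTRO Q)
    (T : ℝ → (X → ℝ) → (X → ℝ)) (hT : IsSol Q T) :
    ∀ t : ℝ, 0 ≤ t → ∀ ε : ℝ, 0 < ε → ∃ N : ℕ, ∀ n : ℕ, N ≤ n →
      ∀ f : X → ℝ, ‖f‖ = 1 →
        ‖T t f - (fun g : X → ℝ => g + (t / (n : ℝ)) • Q g)^[n] f‖ < ε := by
  obtain ⟨C, hC0, hQbd, hQlip⟩ := stmt9_Qlip Q hQ
  intro t ht ε hε
  set M := Real.exp (C * t) with hM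
  have hM0 : 0 ≤ M := le_of_lt (Real.exp_pos _)
  set K := C * (C * M * t) * t * Real.exp (C * t) with hK
  have hK0 : 0 ≤ K := by positivity
  obtain ⟨N0, hN0⟩ := exists_nat_gt (K / ε)
  refine ⟨N0 + 1, ?_⟩
  intro n hn f hf
  have hn1 : 1 ≤ n := le_trans (Nat.le_add_left 1 N0) hn
  have hnpos : (0:ℝ) < (n : ℝ) := by exact_mod_cast hn1
  set h := t / (n : ℝ) with hh
  have hh0 : 0 ≤ h := div_nonneg ht (le_of_lt hnpos)
  have hnh : (n : ℝ) * h = t := by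
    rw [hh]; field_simp
  have h0 : T 0 f = f := hT.1 f
  have hD : ∀ s : ℝ, 0 ≤ s → HasDerivWithinAt (fun u => T u f) (Q (T s f)) (Set.Ici 0) s :=
    fun s hs => hT.2 f s hs
  have hMb : ∀ s ∈ Set.Icc 0 t, ‖T s f‖ ≤ M :=
    stmt9_solBound Q T C t hC0 f hf h0 hQbd hD
  have hmod := stmt9_mod Q T C t M hC0 f hM0 hQbd hD hMb
  have htrunc := stmt9_trunc Q T C t M h hC0 f hM0 hh0 hQlip hD hmod
  have hfinal := stmt9_euler Q T C t M h n hC0 f hM0 hh0 hnh h0 hQlip htrunc n le_rfl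
  rw [hnh] at hfinal
  have hpow : (1 + C * h) ^ n ≤ Real.exp (C * t) := by
    calc (1 + C * h) ^ n ≤ (Real.exp (C * h)) ^ n := by
          apply pow_le_pow_left₀ (by positivity)
          rw [add_comm]
          exact Real.add_one_le_exp (C * h)
      _ = Real.exp ((n : ℝ) * (C * h)) := by rw [Real.exp_nat_mul]
      _ = Real.exp (C * t) := by rw [show (n:ℝ) * (C * h) = C * ((n:ℝ) * h) by ring, hnh]
  have hKn : (n : ℝ) * (C * (C * M * h) * h) * (1 + C * h) ^ n ≤ K / n := by
    have h1 : (0:ℝ) ≤ (n : ℝ) * (C * (C * M * h) * h) := by positivity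
    calc (n : ℝ) * (C * (C * M * h) * h) * (1 + C * h) ^ n
        ≤ (n : ℝ) * (C * (C * M * h) * h) * Real.exp (C * t) :=
          mul_le_mul_of_nonneg_left hpow h1
      _ = K / n := by
          rw [hK, hh]
          field_simp
  have hlt : K / n < ε := by
    rw [div_lt_iff₀ hnpos]
    have h2 : K / ε < (n : ℝ) := by
      calc K / ε < (N0 : ℝ) := hN0
        _ ≤ (n : ℝ) := by exact_mod_cast le_trans (Nat.le_succ N0) hn
    calc K = (K / ε) * ε := by field_simp
      _ < (n : ℝ) * ε := by exact mul_lt_mul_of_pos_right h2 hε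
      _ = ε * n := by ring
  calc ‖T t f - (fun g : X → ℝ => g + (t / (n : ℝ)) • Q g)^[n] f‖
      ≤ (n : ℝ) * (C * (C * M * h) * h) * (1 + C * h) ^ n := hfinal
    _ ≤ K / n := hKn
    _ < ε := hlt
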